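/- Let k > 0 and let G be an abelian group. If the direct sum G^k of k copies of G is isomorphic (as an abelian group) to ℤ^k, then G ≅ ℤ. -/

import Mathlib

/-- If `k > 0` and the direct sum of `k` copies of an abelian group `G` is
isomorphic to `ℤ^k`, then `G ≅ ℤ`. -/
theorem pow_eq_zpow_implies_int (k : ℕ) (hk : 0 < k) (G : Type) [AddCommGroup G]
    (h : Nonempty ((Fin k → G) ≃+ (Fin k → ℤ))) :
    Nonempty (G ≃+ ℤ) := by
  obtain ⟨e₀⟩ := h
  let e : (Fin k → G) ≃ₗ[ℤ] (Fin k → ℤ) := e₀.toIntLinearEquiv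
  let i : Fin k := ⟨0, hk⟩
  -- G is finitely generated: it is the image of ℤ^k under proj ∘ e.symm
  have hfin : Module.Finite ℤ G := by
    apply Module.Finite.of_surjective ((LinearMap.proj i).comp e.symm.toLinearMap)
    intro g
    exact ⟨e (fun _ => g), by simp⟩
  -- G is torsion-free: it embeds into ℤ^k via the constant map then e
  have hntz : NoZeroSMulDivisors ℤ G := by
    refine Function.Injective.noZeroSMulDivisors (fun g => e (fun _ => g)) ?_
      (by show e (fun _ => (0:G)) = 0; rw [show (fun _ : Fin k => (0 : G)) = 0 from rfl, map_zero]) ?_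
    · intro a b hab
      exact congrFun (e.injective hab) i
    · intro c x
      show e (fun _ => c • x) = c • e (fun _ => x)
      rw [show (fun _ : Fin k => c • x) = c • (fun _ : Fin k => x) from rfl, map_smul]
  have hfree : Module.Free ℤ G := Module.free_of_finite_type_torsion_free'
  -- rank computation
  have hr : Module.finrank ℤ (Fin k → G) = Module.finrank ℤ (Fin k → ℤ) := e.finrank_eq
  rw [Module.finrank_pi, Module.finrank_pi_fintype, Finset.sum_const, Finset.card_univ,
    Fintype.card_fin, smul_eq_mul] at hr
  have h1 : Module.finrank ℤ G = 1 := by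
    exact Nat.eq_of_mul_eq_mul_left hk (by rw [mul_one]; exact hr)
  -- conclude
  let b : Module.Basis (Fin 1) ℤ G := h1 ▸ Module.finBasis ℤ G
  exact ⟨(b.equivFun.trans (LinearEquiv.funUnique (Fin 1) ℤ ℤ)).toAddEquiv⟩
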